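/- (Smooth-payoff version of Theorem 3.1.) Let N ∈ ℕ, M = 2^{N+1}, Λ'_N = {(n,k) : 0 ≤ n ≤ N, 0 ≤ k < 2^n}. For y ∈ ℝ and z ∈ ℝ^{Λ'_N} set w_ℓ(y,z) = y·Δ^N_ℓ Ψ_{−1} + Σ_{(n,k)∈Λ'_N} z_{n,k}·Δ^N_ℓ Ψ_{n,k} for ℓ = 0, …, M−1. Let p ≥ 1, let g : ℝ → ℝ be p-times continuously differentiable with g and all its derivatives up to order p bounded, and let F : ℝ^M → ℝ be p-times continuously differentiable with all partial derivatives of orders 1 through p bounded globally by a constant c. Define H(z) = ∫_ℝ g(F(w(y,z))) φ(y) dy, where φ is the standard normal density. Then H is p-times differentiable and there exists a constant C, depending only on p, c and the bounds on g and its derivatives (in particular independent of N and of the indices n_j, k_j), such that for all (n_1,k_1), …, (n_p,k_p) ∈ Λ'_N, |∂^p H / ∂z_{n_1,k_1} ⋯ ∂z_{n_p,k_p}(z)| ≤ C · 2^{−(n_1 + ⋯ + n_p)/2} for every z. -/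

import Mathlib

open MeasureTheory

/-- The Haar mother wavelet. -/
noncomputable def haarMother (t : ℝ) : ℝ :=
  if 0 ≤ t ∧ t < 1/2 then 1 else if 1/2 ≤ t ∧ t < 1 then -1 else 0

/-- The Haar function ψ_{n,k}. -/
noncomputable def haarFn (n k : ℕ) (t : ℝ) : ℝ :=
  (2:ℝ) ^ ((n : ℝ)/2) * haarMother ((2:ℝ)^n * t - k)

/-- The antiderivative Ψ_{n,k}(t) = ∫_0^t ψ_{n,k}(s) ds. -/
noncomputable def haarAnti (n k : ℕ) (t : ℝ) : ℝ := ∫ s in (0:ℝ)..t, haarFn n k s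

/-- The function ψ_{-1} = 1_{[0,1]}. -/
noncomputable def haarNeg (t : ℝ) : ℝ := Set.indicator (Set.Icc (0:ℝ) 1) (fun _ => 1) t

/-- The antiderivative Ψ_{-1}(t) = ∫_0^t ψ_{-1}(s) ds. -/
noncomputable def haarNegAnti (t : ℝ) : ℝ := ∫ s in (0:ℝ)..t, haarNeg s

/-- The dyadic grid point t^N_ℓ = ℓ / 2^{N+1}. -/
noncomputable def gridPt (N ℓ : ℕ) : ℝ := (ℓ : ℝ) / 2 ^ (N+1)

/-- The index set Λ'_N = {(n,k) : 0 ≤ n ≤ N, 0 ≤ k < 2^n}. -/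
abbrev HaarIdx' (N : ℕ) := (n : Fin (N+1)) × Fin (2^(n:ℕ))

/-- The standard normal density φ(y) = (2π)^{-1/2} exp(-y²/2). -/
noncomputable def stdGaussPDF (y : ℝ) : ℝ :=
  (Real.sqrt (2 * Real.pi))⁻¹ * Real.exp (-y^2/2)

/-- The Brownian-increment map
`w_ℓ(y,z) = y Δ^N_ℓ Ψ_{-1} + Σ_{(n,k) ∈ Λ'_N} z_{n,k} Δ^N_ℓ Ψ_{n,k}`. -/
noncomputable def wMapY (N : ℕ) (y : ℝ) (z : HaarIdx' N → ℝ) : Fin (2^(N+1)) → ℝ :=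
  fun ℓ =>
    y * (haarNegAnti (gridPt N ((ℓ : ℕ)+1)) - haarNegAnti (gridPt N (ℓ : ℕ))) +
      ∑ i : HaarIdx' N,
        z i * (haarAnti i.1 i.2 (gridPt N ((ℓ : ℕ)+1)) - haarAnti i.1 i.2 (gridPt N (ℓ : ℕ)))

set_option maxHeartbeats 1000000
set_option synthInstance.maxHeartbeats 200000

lemma stdGaussPDF_nonneg (y : ℝ) : 0 ≤ stdGaussPDF y := by
  unfold stdGaussPDF; positivity

lemma continuous_stdGaussPDF : Continuous stdGaussPDF := by
  unfold stdGaussPDF; fun_prop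

lemma stdGaussPDF_eq :
    stdGaussPDF = fun y => (Real.sqrt (2*Real.pi))⁻¹ * Real.exp (-(1/2) * y^2) := by
  funext y; unfold stdGaussPDF; ring_nf

lemma integrable_stdGaussPDF : Integrable stdGaussPDF := by
  rw [stdGaussPDF_eq]
  exact (integrable_exp_neg_mul_sq (by norm_num)).const_mul _

lemma integral_stdGaussPDF : ∫ y : ℝ, stdGaussPDF y = 1 := by
  rw [stdGaussPDF_eq]
  rw [integral_const_mul, integral_gaussian]
  have h : Real.pi / (1/2) = 2 * Real.pi := by ring
  rw [h, inv_mul_cancel₀]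
  exact Real.sqrt_ne_zero'.mpr (by positivity)

lemma integrable_gauss_smul {G : Type*} [NormedAddCommGroup G] [NormedSpace ℝ G]
    {v : ℝ → G} (hv : Continuous v) {B : ℝ} (hB : ∀ y, ‖v y‖ ≤ B) :
    Integrable (fun y => stdGaussPDF y • v y) := by
  refine Integrable.mono' (integrable_stdGaussPDF.mul_const B)
    ((continuous_stdGaussPDF.smul hv).aestronglyMeasurable)
    (Filter.Eventually.of_forall fun y => ?_)
  rw [norm_smul, Real.norm_eq_abs, abs_of_nonneg (stdGaussPDF_nonneg y)]
  exact mul_le_mul_of_nonneg_left (hB y) (stdGaussPDF_nonneg y)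

section ParamIntegral

lemma param_integral {Z E : Type} [NormedAddCommGroup Z] [NormedSpace ℝ Z]
    [NormedAddCommGroup E] [NormedSpace ℝ E] :
    ∀ (p : ℕ) {G : Type} [NormedAddCommGroup G] [NormedSpace ℝ G] [CompleteSpace G]
      (u : E → G), ContDiff ℝ p u →
      (∀ j, j ≤ p → ∃ B, ∀ x, ‖iteratedFDeriv ℝ j u x‖ ≤ B) →
      ∀ (a : E) (L : Z →L[ℝ] E),
      ContDiff ℝ p (fun z => ∫ y : ℝ, stdGaussPDF y • u (y • a + L z)) ∧
      ∀ (z : Z) (v : Fin p → Z),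
        iteratedFDeriv ℝ p (fun z' => ∫ y : ℝ, stdGaussPDF y • u (y • a + L z')) z v
          = ∫ y : ℝ, stdGaussPDF y • iteratedFDeriv ℝ p u (y • a + L z) (fun i => L (v i)) := by
  intro p
  induction p with
  | zero =>
    intro G _ _ _ u hu hb a L
    obtain ⟨B, hB⟩ := hb 0 le_rfl
    have hB' : ∀ x, ‖u x‖ ≤ B := fun x => by
      simpa [norm_iteratedFDeriv_zero] using hB x
    have wcont : ∀ z : Z, Continuous fun y : ℝ => y • a + L z := fun z =>
      (continuous_id.smul continuous_const).add continuous_const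
    constructor
    · rw [show ((0:ℕ) : WithTop ℕ∞) = 0 from rfl, contDiff_zero]
      apply continuous_of_dominated (bound := fun y => stdGaussPDF y * B)
      · intro z
        exact (continuous_stdGaussPDF.smul (hu.continuous.comp (wcont z))).aestronglyMeasurable
      · intro z
        refine Filter.Eventually.of_forall fun y => ?_
        rw [norm_smul, Real.norm_eq_abs, abs_of_nonneg (stdGaussPDF_nonneg y)]
        exact mul_le_mul_of_nonneg_left (hB' _) (stdGaussPDF_nonneg y)
      · exact integrable_stdGaussPDF.mul_const B
      · refine Filter.Eventually.of_forall fun y => ?_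
        exact continuous_const.smul (hu.continuous.comp (continuous_const.add L.continuous))
    · intro z v
      simp only [iteratedFDeriv_zero_apply]
  | succ p ih =>
    intro G iG1 iG2 iG3 u hu hb a L
    have hp1 : ((p:WithTop ℕ∞) + 1) ≤ ((p+1 : ℕ) : WithTop ℕ∞) := by
      rw [Nat.cast_succ]
    have hu' : ContDiff ℝ p (fderiv ℝ u) := hu.fderiv_right hp1
    set A : (E →L[ℝ] G) →L[ℝ] (Z →L[ℝ] G) := (ContinuousLinearMap.compL ℝ Z E G).flip L with hA
    set u₁ : E → (Z →L[ℝ] G) := fun x => A (fderiv ℝ u x) with hu₁def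
    have hu₁ : ContDiff ℝ p u₁ := A.contDiff.comp hu'
    have hb₁ : ∀ j, j ≤ p → ∃ B, ∀ x, ‖iteratedFDeriv ℝ j u₁ x‖ ≤ B := by
      intro j hj
      obtain ⟨B, hB⟩ := hb (j+1) (Nat.succ_le_succ hj)
      refine ⟨‖A‖ * B, fun x => ?_⟩
      have h1 : iteratedFDeriv ℝ j u₁ x
          = A.compContinuousMultilinearMap (iteratedFDeriv ℝ j (fderiv ℝ u) x) :=
        A.iteratedFDeriv_comp_left hu'.contDiffAt (by exact_mod_cast hj)
      rw [h1]
      calc ‖A.compContinuousMultilinearMap (iteratedFDeriv ℝ j (fderiv ℝ u) x)‖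
          ≤ ‖A‖ * ‖iteratedFDeriv ℝ j (fderiv ℝ u) x‖ :=
            A.norm_compContinuousMultilinearMap_le _
        _ = ‖A‖ * ‖iteratedFDeriv ℝ (j+1) u x‖ := by rw [norm_iteratedFDeriv_fderiv]
        _ ≤ ‖A‖ * B := mul_le_mul_of_nonneg_left (hB x) (norm_nonneg A)
    obtain ⟨B₀, hB₀⟩ := hb 0 (Nat.zero_le _)
    have hB₀' : ∀ x, ‖u x‖ ≤ B₀ := fun x => by
      simpa [norm_iteratedFDeriv_zero] using hB₀ x
    obtain ⟨B₁, hB₁⟩ := hb 1 (Nat.succ_le_succ (Nat.zero_le _))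
    have hB₁' : ∀ x, ‖fderiv ℝ u x‖ ≤ B₁ := fun x => by
      have := norm_iteratedFDeriv_fderiv (𝕜 := ℝ) (f := u) (x := x) (n := 0)
      simp only [norm_iteratedFDeriv_zero] at this
      rw [this]; exact hB₁ x
    have hu₁bd : ∀ x, ‖u₁ x‖ ≤ B₁ * ‖L‖ := by
      intro x
      have : u₁ x = (fderiv ℝ u x).comp L := rfl
      rw [this]
      calc ‖(fderiv ℝ u x).comp L‖ ≤ ‖fderiv ℝ u x‖ * ‖L‖ :=
            ContinuousLinearMap.opNorm_comp_le _ _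
        _ ≤ B₁ * ‖L‖ := mul_le_mul_of_nonneg_right (hB₁' x) (norm_nonneg L)
    have wcont : ∀ z : Z, Continuous fun y : ℝ => y • a + L z := fun z =>
      (continuous_id.smul continuous_const).add continuous_const
    have hudiff : Differentiable ℝ u := hu.differentiable (by simp)
    have hasD : ∀ z : Z, HasFDerivAt (fun z' => ∫ y : ℝ, stdGaussPDF y • u (y • a + L z'))
        (∫ y : ℝ, stdGaussPDF y • u₁ (y • a + L z)) z := by
      intro z
      apply hasFDerivAt_integral_of_dominated_of_fderiv_le
        (F' := fun z' (y : ℝ) => stdGaussPDF y • u₁ (y • a + L z'))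
        (bound := fun y => stdGaussPDF y * (B₁ * ‖L‖)) (s := Set.univ) Filter.univ_mem
      · exact Filter.Eventually.of_forall fun z' =>
          (continuous_stdGaussPDF.smul (hu.continuous.comp (wcont z'))).aestronglyMeasurable
      · exact integrable_gauss_smul (hu.continuous.comp (wcont z)) (fun y => hB₀' _)
      · exact (continuous_stdGaussPDF.smul ((hu₁.continuous).comp (wcont z))).aestronglyMeasurable
      · refine Filter.Eventually.of_forall fun y => fun z' _ => ?_
        rw [norm_smul (stdGaussPDF y) (u₁ (y • a + L z')), Real.norm_eq_abs,
          abs_of_nonneg (stdGaussPDF_nonneg y)]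
        exact mul_le_mul_of_nonneg_left (hu₁bd _) (stdGaussPDF_nonneg y)
      · exact integrable_stdGaussPDF.mul_const _
      · refine Filter.Eventually.of_forall fun y => fun z' _ => ?_
        have h1 : HasFDerivAt (fun z'' : Z => y • a + L z'') L z' := by
          simpa using (L.hasFDerivAt (x := z')).const_add (y • a)
        have h2 : HasFDerivAt u (fderiv ℝ u (y • a + L z')) (y • a + L z') :=
          (hudiff _).hasFDerivAt
        have h3 := h2.comp z' h1
        have h4 := h3.const_smul (stdGaussPDF y)
        convert h4 using 1 <;> rfl
    have hfder : (fderiv ℝ (fun z' => ∫ y : ℝ, stdGaussPDF y • u (y • a + L z')))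
        = fun z => ∫ y : ℝ, stdGaussPDF y • u₁ (y • a + L z) :=
      funext fun z => (hasD z).fderiv
    obtain ⟨ihC, ihF⟩ := ih u₁ hu₁ hb₁ a L
    constructor
    · rw [Nat.cast_succ, contDiff_succ_iff_fderiv]
      refine ⟨fun z => (hasD z).differentiableAt, ?_, ?_⟩
      · intro h; exact absurd h (by simp)
      · rw [hfder]; exact ihC
    · intro z v
      rw [iteratedFDeriv_succ_apply_right, hfder, ihF z (Fin.init v)]
      have hInt : Integrable (fun y : ℝ => stdGaussPDF y •
          iteratedFDeriv ℝ p u₁ (y • a + L z) (fun i => L (Fin.init v i))) := by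
        obtain ⟨Bp, hBp⟩ := hb₁ p le_rfl
        refine integrable_gauss_smul ?_ (B := Bp * ∏ i, ‖L (Fin.init v i)‖) ?_
        · exact (continuous_eval_const _).comp
            ((hu₁.continuous_iteratedFDeriv le_rfl).comp (wcont z))
        · intro y
          calc ‖iteratedFDeriv ℝ p u₁ (y • a + L z) (fun i => L (Fin.init v i))‖
              ≤ ‖iteratedFDeriv ℝ p u₁ (y • a + L z)‖ * ∏ i, ‖L (Fin.init v i)‖ :=
                ContinuousMultilinearMap.le_opNorm _ _
            _ ≤ Bp * ∏ i, ‖L (Fin.init v i)‖ :=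
                mul_le_mul_of_nonneg_right (hBp _)
                  (Finset.prod_nonneg fun _ _ => norm_nonneg _)
      rw [ContinuousLinearMap.integral_apply hInt]
      congr 1
      funext y
      rw [ContinuousLinearMap.smul_apply]
      congr 1
      have e1 : iteratedFDeriv ℝ p u₁ (y • a + L z)
          = A.compContinuousMultilinearMap (iteratedFDeriv ℝ p (fderiv ℝ u) (y • a + L z)) :=
        A.iteratedFDeriv_comp_left hu'.contDiffAt le_rfl
      rw [e1, iteratedFDeriv_succ_apply_right]
      rfl

end ParamIntegral

section Multilinear

lemma cmlmap_basis_expand {ι : Type*} [Fintype ι] [DecidableEq ι] {q : ℕ}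
    (m : ContinuousMultilinearMap ℝ (fun _ : Fin q => (ι → ℝ)) ℝ) (v : Fin q → ι → ℝ) :
    m v = ∑ r : Fin q → ι, (∏ i, v i (r i)) • m (fun i => Pi.single (r i) (1:ℝ)) := by
  have hv : v = fun i => ∑ ℓ : ι, v i ℓ • (Pi.single ℓ (1:ℝ) : ι → ℝ) := by
    funext i
    rw [← Finset.univ_sum_single (v i)]
    refine (Finset.sum_congr rfl fun ℓ _ => ?_).symm
    funext j
    simp [Pi.single_apply, mul_ite]
  conv_lhs => rw [hv]
  rw [m.map_sum]
  exact Finset.sum_congr rfl fun r _ => m.map_smul_univ _ _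

lemma opnorm_of_basis_bound {ι : Type*} [Fintype ι] [DecidableEq ι] [Nonempty ι] {q : ℕ}
    (m : ContinuousMultilinearMap ℝ (fun _ : Fin q => (ι → ℝ)) ℝ) {c : ℝ}
    (hc : ∀ r : Fin q → ι, |m (fun i => Pi.single (r i) 1)| ≤ c) :
    ‖m‖ ≤ (Fintype.card ι : ℝ)^q * c := by
  have hc0 : 0 ≤ c := le_trans (abs_nonneg _) (hc (fun _ => Classical.arbitrary _))
  refine ContinuousMultilinearMap.opNorm_le_bound (by positivity) fun v => ?_
  rw [cmlmap_basis_expand]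
  calc ‖∑ r : Fin q → ι, (∏ i, v i (r i)) • m (fun i => Pi.single (r i) (1:ℝ))‖
      ≤ ∑ r : Fin q → ι, ‖(∏ i, v i (r i)) • m (fun i => Pi.single (r i) (1:ℝ))‖ :=
        norm_sum_le _ _
    _ ≤ ∑ _r : Fin q → ι, (∏ i, ‖v i‖) * c := by
        refine Finset.sum_le_sum fun r _ => ?_
        rw [norm_smul, Real.norm_eq_abs, Real.norm_eq_abs, Finset.abs_prod]
        refine mul_le_mul ?_ (hc r) (abs_nonneg _) (Finset.prod_nonneg fun _ _ => norm_nonneg _)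
        exact Finset.prod_le_prod (fun _ _ => abs_nonneg _) fun i _ => norm_le_pi_norm (v i) (r i)
    _ = (Fintype.card ι : ℝ)^q * c * ∏ i, ‖v i‖ := by
        rw [Finset.sum_const, Finset.card_univ, Fintype.card_fun]
        simp [nsmul_eq_mul]
        ring
  
end Multilinear

section Faa

lemma comp_directional_bound {M : ℕ} (p : ℕ) {Cg c : ℝ} (g : ℝ → ℝ) (F : (Fin M → ℝ) → ℝ)
    (hg : ContDiff ℝ p g) (hF : ContDiff ℝ p F)
    (hgb : ∀ j, j ≤ p → ∀ t : ℝ, |iteratedDeriv j g t| ≤ Cg)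
    (hFb : ∀ j, 1 ≤ j → j ≤ p → ∀ (x : Fin M → ℝ) (v : Fin j → Fin M),
      |iteratedFDeriv ℝ j F x (fun i => Pi.single (v i) 1)| ≤ c)
    (x : Fin M → ℝ) (r : Fin p → Fin M) :
    |iteratedFDeriv ℝ p (g ∘ F) x (fun i => Pi.single (r i) 1)| ≤
      (Fintype.card (OrderedFinpartition p) : ℝ) * (Cg * (max 1 c)^p) := by
  have hq : HasFTaylorSeriesUpTo ((p:ℕ∞) : WithTop ℕ∞) g (ftaylorSeries ℝ g) :=
    contDiff_iff_ftaylorSeries.mp (by exact_mod_cast hg)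
  have hp' : HasFTaylorSeriesUpTo ((p:ℕ∞) : WithTop ℕ∞) F (ftaylorSeries ℝ F) :=
    contDiff_iff_ftaylorSeries.mp (by exact_mod_cast hF)
  have hcomp : HasFTaylorSeriesUpToOn ((p:ℕ∞):WithTop ℕ∞) (g ∘ F)
      (fun x => (ftaylorSeries ℝ g (F x)).taylorComp (ftaylorSeries ℝ F x)) Set.univ :=
    (hasFTaylorSeriesUpToOn_univ_iff.mpr hq).comp (hasFTaylorSeriesUpToOn_univ_iff.mpr hp')
      (Set.mapsTo_univ _ _)
  have heq : iteratedFDeriv ℝ p (g ∘ F) x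
      = (ftaylorSeries ℝ g (F x)).taylorComp (ftaylorSeries ℝ F x) p := by
    rw [← iteratedFDerivWithin_univ]
    exact (hcomp.eq_iteratedFDerivWithin_of_uniqueDiffOn (by exact_mod_cast le_rfl)
      uniqueDiffOn_univ (Set.mem_univ x)).symm
  rw [heq]
  have hsum : ((ftaylorSeries ℝ g (F x)).taylorComp (ftaylorSeries ℝ F x) p)
        (fun i => Pi.single (r i) 1)
      = ∑ cpt : OrderedFinpartition p,
          ((ftaylorSeries ℝ g (F x)).compAlongOrderedFinpartition (ftaylorSeries ℝ F x) cpt)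
            (fun i => Pi.single (r i) 1) := by
    rw [FormalMultilinearSeries.taylorComp, ContinuousMultilinearMap.sum_apply]
  rw [hsum]
  have hbound : ∀ cpt : OrderedFinpartition p,
      |((ftaylorSeries ℝ g (F x)).compAlongOrderedFinpartition (ftaylorSeries ℝ F x) cpt)
          (fun i => Pi.single (r i) 1)| ≤ Cg * (max 1 c)^p := by
    intro cpt
    rw [FormalMultilinearSeries.compAlongOrderedFinpartition_apply]
    set t : Fin cpt.length → ℝ :=
      cpt.applyOrderedFinpartition (fun m => (ftaylorSeries ℝ F x (cpt.partSize m)))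
        (fun i => Pi.single (r i) 1) with ht
    have hval : (ftaylorSeries ℝ g (F x) cpt.length) t
        = (∏ i, t i) * iteratedDeriv cpt.length g (F x) := by
      have h1 : (ftaylorSeries ℝ g (F x) cpt.length) t
          = (ftaylorSeries ℝ g (F x) cpt.length) (fun i => t i • (1:ℝ)) := by
        congr 1; funext i; simp
      rw [h1, ContinuousMultilinearMap.map_smul_univ, iteratedDeriv_eq_iteratedFDeriv,
        smul_eq_mul]
      rfl
    rw [hval, abs_mul]
    have hti : ∀ m : Fin cpt.length, |t m| ≤ max 1 c := by
      intro m
      rw [ht, cpt.applyOrderedFinpartition_apply]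
      refine le_trans (hFb (cpt.partSize m) (cpt.partSize_pos m) (cpt.partSize_le m) x
        (fun i => r (cpt.emb m i))) (le_max_right 1 c)
    calc |∏ i, t i| * |iteratedDeriv cpt.length g (F x)|
        ≤ (max 1 c)^p * Cg := by
          refine mul_le_mul ?_ (hgb cpt.length cpt.length_le (F x)) (abs_nonneg _) (by positivity)
          rw [Finset.abs_prod]
          calc ∏ m, |t m| ≤ ∏ _m : Fin cpt.length, max 1 c :=
                Finset.prod_le_prod (fun _ _ => abs_nonneg _) fun m _ => hti m
            _ = (max 1 c)^cpt.length := by rw [Finset.prod_const, Finset.card_univ,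
                  Fintype.card_fin]
            _ ≤ (max 1 c)^p := pow_le_pow_right₀ (le_max_left 1 c) cpt.length_le
      _ = Cg * (max 1 c)^p := mul_comm _ _
  calc |∑ cpt : OrderedFinpartition p, _| ≤ ∑ cpt : OrderedFinpartition p,
        |((ftaylorSeries ℝ g (F x)).compAlongOrderedFinpartition (ftaylorSeries ℝ F x) cpt)
          (fun i => Pi.single (r i) 1)| := Finset.abs_sum_le_sum_abs _ _
    _ ≤ ∑ _cpt : OrderedFinpartition p, Cg * (max 1 c)^p :=
        Finset.sum_le_sum fun cpt _ => hbound cpt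
    _ = (Fintype.card (OrderedFinpartition p) : ℝ) * (Cg * (max 1 c)^p) := by
        rw [Finset.sum_const, Finset.card_univ, nsmul_eq_mul]

end Faa

section Haar

lemma measurable_haarMother : Measurable haarMother := by
  unfold haarMother
  refine Measurable.ite ?_ measurable_const (Measurable.ite ?_ measurable_const measurable_const)
  · show MeasurableSet {t : ℝ | 0 ≤ t ∧ t < 1/2}
    have : {t : ℝ | 0 ≤ t ∧ t < 1/2} = Set.Ico (0:ℝ) (1/2) := rfl
    rw [this]; exact measurableSet_Ico
  · show MeasurableSet {t : ℝ | 1/2 ≤ t ∧ t < 1}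
    have : {t : ℝ | 1/2 ≤ t ∧ t < 1} = Set.Ico (1/2:ℝ) 1 := rfl
    rw [this]; exact measurableSet_Ico

lemma abs_haarMother_le_one (t : ℝ) : |haarMother t| ≤ 1 := by
  unfold haarMother
  split_ifs <;> norm_num

lemma abs_haarMother_le_indicator (t : ℝ) :
    |haarMother t| ≤ Set.indicator (Set.Ico (0:ℝ) 1) (fun _ => (1:ℝ)) t := by
  by_cases h : t ∈ Set.Ico (0:ℝ) 1
  · rw [Set.indicator_of_mem h]; exact abs_haarMother_le_one t
  · rw [Set.indicator_of_notMem h]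
    have : haarMother t = 0 := by
      unfold haarMother
      rw [Set.mem_Ico, not_and_or, not_le, not_lt] at h
      split_ifs with h1 h2
      · rcases h with h | h
        · exact absurd h1.1 (not_le.mpr h)
        · exact absurd (lt_of_lt_of_le h1.2 (by norm_num)) (not_lt.mpr h)
      · rcases h with h | h
        · exact absurd (le_trans (by norm_num) h2.1) (not_le.mpr h)
        · exact absurd h2.2 (not_lt.mpr h)
      · rfl
    rw [this, abs_zero]

lemma measurable_haarFn (n k : ℕ) : Measurable (haarFn n k) := by
  unfold haarFn
  exact (measurable_haarMother.comp ((measurable_id.const_mul _).sub measurable_const)).const_mul _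

lemma abs_haarFn_le (n k : ℕ) (t : ℝ) : |haarFn n k t| ≤ (2:ℝ) ^ ((n:ℝ)/2) := by
  unfold haarFn
  rw [abs_mul, abs_of_nonneg (le_of_lt (Real.rpow_pos_of_pos two_pos _))]
  calc (2:ℝ)^((n:ℝ)/2) * |haarMother (2^n*t - k)| ≤ (2:ℝ)^((n:ℝ)/2) * 1 :=
        mul_le_mul_of_nonneg_left (abs_haarMother_le_one _) (le_of_lt (Real.rpow_pos_of_pos two_pos _))
    _ = (2:ℝ)^((n:ℝ)/2) := mul_one _

lemma abs_haarFn_le_indicator (n k : ℕ) (t : ℝ) :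
    |haarFn n k t| ≤ (2:ℝ) ^ ((n:ℝ)/2) *
      Set.indicator (Set.Ico ((k:ℝ)/2^n) (((k:ℝ)+1)/2^n)) (fun _ => (1:ℝ)) t := by
  unfold haarFn
  rw [abs_mul, abs_of_nonneg (le_of_lt (Real.rpow_pos_of_pos two_pos _))]
  refine mul_le_mul_of_nonneg_left ?_ (le_of_lt (Real.rpow_pos_of_pos two_pos _))
  refine le_trans (abs_haarMother_le_indicator _) (le_of_eq ?_)
  have hpow : (0:ℝ) < 2^n := by positivity
  have hmem : ((2:ℝ)^n * t - k) ∈ Set.Ico (0:ℝ) 1 ↔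
      t ∈ Set.Ico ((k:ℝ)/2^n) (((k:ℝ)+1)/2^n) := by
    rw [Set.mem_Ico, Set.mem_Ico]
    constructor
    · rintro ⟨h1, h2⟩
      constructor
      · rw [div_le_iff₀ hpow]; linarith [h1]
      · rw [lt_div_iff₀ hpow]; linarith [h2]
    · rintro ⟨h1, h2⟩
      rw [div_le_iff₀ hpow] at h1
      rw [lt_div_iff₀ hpow] at h2
      constructor <;> [linarith; linarith]
  rw [Set.indicator_apply, Set.indicator_apply, if_congr hmem rfl rfl]

lemma intervalIntegrable_of_bounded {f : ℝ → ℝ} (hf : Measurable f) {B : ℝ}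
    (hB : ∀ t, |f t| ≤ B) (a b : ℝ) : IntervalIntegrable f volume a b := by
  refine ⟨?_, ?_⟩ <;>
  · refine Integrable.mono' (g := fun _ => B)
      (integrableOn_const (C := B) measure_Ioc_lt_top.ne)
      hf.aestronglyMeasurable.restrict (Filter.Eventually.of_forall fun t => ?_)
    simpa [Real.norm_eq_abs] using hB t

lemma haarFn_intervalIntegrable (n k : ℕ) (a b : ℝ) :
    IntervalIntegrable (haarFn n k) volume a b :=
  intervalIntegrable_of_bounded (measurable_haarFn n k) (abs_haarFn_le n k) a b

lemma gridPt_mono (N : ℕ) {ℓ ℓ' : ℕ} (h : ℓ ≤ ℓ') : gridPt N ℓ ≤ gridPt N ℓ' := by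
  unfold gridPt
  apply div_le_div_of_nonneg_right ?_ (by positivity)
  · exact_mod_cast h

lemma haar_sum_bound (N n k : ℕ) :
    ∑ ℓ : Fin (2^(N+1)), |haarAnti n k (gridPt N ((ℓ:ℕ)+1)) - haarAnti n k (gridPt N (ℓ:ℕ))|
      ≤ (2:ℝ) ^ (-(n:ℝ)/2) := by
  have hii := haarFn_intervalIntegrable n k
  have h1 : ∀ ℓ : Fin (2^(N+1)),
      |haarAnti n k (gridPt N ((ℓ:ℕ)+1)) - haarAnti n k (gridPt N (ℓ:ℕ))|
        ≤ ∫ t in gridPt N (ℓ:ℕ)..gridPt N ((ℓ:ℕ)+1), |haarFn n k t| := by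
    intro ℓ
    unfold haarAnti
    rw [intervalIntegral.integral_interval_sub_left (hii 0 _) (hii 0 _)]
    exact intervalIntegral.abs_integral_le_integral_abs (gridPt_mono N (Nat.le_succ _))
  calc ∑ ℓ : Fin (2^(N+1)), |haarAnti n k (gridPt N ((ℓ:ℕ)+1)) - haarAnti n k (gridPt N (ℓ:ℕ))|
      ≤ ∑ ℓ : Fin (2^(N+1)), ∫ t in gridPt N (ℓ:ℕ)..gridPt N ((ℓ:ℕ)+1), |haarFn n k t| :=
        Finset.sum_le_sum fun ℓ _ => h1 ℓ
    _ = ∫ t in (0:ℝ)..1, |haarFn n k t| := by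
        rw [Fin.sum_univ_eq_sum_range
          (fun ℓ => ∫ t in gridPt N ℓ..gridPt N (ℓ+1), |haarFn n k t|)]
        rw [intervalIntegral.sum_integral_adjacent_intervals (fun i _ => (hii _ _).abs)]
        have h0 : gridPt N 0 = 0 := by simp [gridPt]
        have h2 : gridPt N (2^(N+1)) = 1 := by
          unfold gridPt
          rw [Nat.cast_pow]
          norm_num
        rw [h0, h2]
    _ ≤ ∫ t in (0:ℝ)..1, (2:ℝ)^((n:ℝ)/2) *
          Set.indicator (Set.Ico ((k:ℝ)/2^n) (((k:ℝ)+1)/2^n)) (fun _ => (1:ℝ)) t := by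
        refine intervalIntegral.integral_mono_on zero_le_one ((hii 0 1).abs) ?_
          fun t _ => abs_haarFn_le_indicator n k t
        refine IntervalIntegrable.const_mul ?_ _
        refine intervalIntegrable_of_bounded ?_ (B := 1) ?_ 0 1
        · exact (measurable_const.indicator measurableSet_Ico)
        · intro t
          rw [Set.indicator_apply]
          split_ifs <;> norm_num
    _ = (2:ℝ)^((n:ℝ)/2) * ∫ t in (0:ℝ)..1,
          Set.indicator (Set.Ico ((k:ℝ)/2^n) (((k:ℝ)+1)/2^n)) (fun _ => (1:ℝ)) t := by
        rw [intervalIntegral.integral_const_mul]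
    _ ≤ (2:ℝ)^((n:ℝ)/2) * ((2:ℝ)^n)⁻¹ := by
        refine mul_le_mul_of_nonneg_left ?_ (le_of_lt (Real.rpow_pos_of_pos two_pos _))
        rw [intervalIntegral.integral_of_le zero_le_one,
          MeasureTheory.integral_indicator measurableSet_Ico]
        calc ∫ t in Set.Ico ((k:ℝ)/2^n) (((k:ℝ)+1)/2^n), (1:ℝ)
              ∂(volume.restrict (Set.Ioc (0:ℝ) 1))
            = ((volume.restrict (Set.Ioc (0:ℝ) 1)) (Set.Ico ((k:ℝ)/2^n) (((k:ℝ)+1)/2^n))).toReal := by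
              rw [MeasureTheory.setIntegral_const, smul_eq_mul, mul_one]; rfl
          _ ≤ (volume (Set.Ico ((k:ℝ)/2^n) (((k:ℝ)+1)/2^n))).toReal := by
              refine ENNReal.toReal_mono (by rw [Real.volume_Ico]; exact ENNReal.ofReal_ne_top)
                (Measure.restrict_apply_le _ _)
          _ = ((2:ℝ)^n)⁻¹ := by
              rw [Real.volume_Ico]
              rw [show ((k:ℝ)+1)/2^n - (k:ℝ)/2^n = ((2:ℝ)^n)⁻¹ by field_simp; ring]
              rw [ENNReal.toReal_ofReal (by positivity)]
    _ = (2:ℝ)^(-(n:ℝ)/2) := by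
        rw [show ((2:ℝ)^n)⁻¹ = (2:ℝ)^(-(n:ℝ)) by
          rw [← Real.rpow_natCast 2 n, ← Real.rpow_neg (by norm_num)]]
        rw [← Real.rpow_add two_pos]
        congr 1
        ring

end Haar

lemma prod_rpow_half {p : ℕ} (x : Fin p → ℕ) :
    ∏ j, (2:ℝ) ^ (-(x j : ℝ)/2) = (2:ℝ) ^ (-(∑ j, (x j:ℝ))/2) := by
  have h2 : ∀ y : ℝ, (2:ℝ)^y = Real.exp (Real.log 2 * y) := fun y =>
    Real.rpow_def_of_pos two_pos y
  simp_rw [h2, ← Real.exp_sum]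
  congr 1
  rw [← Finset.mul_sum]
  congr 1
  rw [show -(∑ j, (x j:ℝ))/2 = ∑ j, (-(x j : ℝ)/2) by simp [neg_div, Finset.sum_div]]


/-- smooth-payoff version of Theorem 3.1: for `g` p-times continuously
differentiable with all derivatives up to order `p` bounded by `Cg`, and `F` p-times
continuously differentiable with all partial derivatives of orders 1 through `p` bounded
by `c`, the pre-integrated function `H(z) = ∫ g(F(w(y,z))) φ(y) dy` is p-times
differentiable and its p-th order partial derivatives satisfy
`|∂^p H/∂z_{n_1,k_1}⋯∂z_{n_p,k_p}| ≤ C 2^{-(n_1+⋯+n_p)/2}` with `C` independent of `N`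
and of the indices. -/
theorem smooth_payoff_haar_bound (p : ℕ) (hp : 1 ≤ p) (c Cg : ℝ) :
    ∃ C : ℝ, ∀ (N : ℕ) (g : ℝ → ℝ) (F : (Fin (2^(N+1)) → ℝ) → ℝ),
      ContDiff ℝ p g →
      (∀ j ≤ p, ∀ x : ℝ, |iteratedDeriv j g x| ≤ Cg) →
      ContDiff ℝ p F →
      (∀ j, 1 ≤ j → j ≤ p → ∀ (x : Fin (2^(N+1)) → ℝ) (v : Fin j → Fin (2^(N+1))),
        |iteratedFDeriv ℝ j F x (fun i => Pi.single (v i) 1)| ≤ c) →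
      ContDiff ℝ p (fun z : HaarIdx' N → ℝ => ∫ y : ℝ, g (F (wMapY N y z)) * stdGaussPDF y) ∧
      ∀ (idx : Fin p → HaarIdx' N) (z : HaarIdx' N → ℝ),
        |iteratedFDeriv ℝ p
            (fun z' : HaarIdx' N → ℝ => ∫ y : ℝ, g (F (wMapY N y z')) * stdGaussPDF y) z
            (fun i => Pi.single (idx i) 1)| ≤
          C * (2:ℝ) ^ (-(∑ j, (((idx j).1 : ℕ) : ℝ)) / 2) := by
  refine ⟨(Fintype.card (OrderedFinpartition p) : ℝ) * (max 0 Cg * (max 1 c)^p), ?_⟩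
  intro N g F hg hgb hF hFb
  haveI : Nonempty (Fin (2^(N+1))) := ⟨⟨0, by positivity⟩⟩
  set d : HaarIdx' N → (Fin (2^(N+1)) → ℝ) := fun i ℓ =>
    haarAnti i.1 i.2 (gridPt N ((ℓ:ℕ)+1)) - haarAnti i.1 i.2 (gridPt N (ℓ:ℕ)) with hd
  set a₀ : Fin (2^(N+1)) → ℝ := fun ℓ =>
    haarNegAnti (gridPt N ((ℓ:ℕ)+1)) - haarNegAnti (gridPt N (ℓ:ℕ)) with ha₀
  set L₀ : (HaarIdx' N → ℝ) →ₗ[ℝ] (Fin (2^(N+1)) → ℝ) :=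
    { toFun := fun z ℓ => ∑ i, z i * d i ℓ
      map_add' := by intro z z'; funext ℓ; simp [add_mul, Finset.sum_add_distrib]
      map_smul' := by intro r z; funext ℓ; simp [Finset.mul_sum, mul_assoc] } with hL₀
  set L : (HaarIdx' N → ℝ) →L[ℝ] (Fin (2^(N+1)) → ℝ) := L₀.toContinuousLinearMap with hL
  have hLz : ∀ (z : HaarIdx' N → ℝ) (ℓ : Fin (2^(N+1))), L z ℓ = ∑ i, z i * d i ℓ :=
    fun z ℓ => rfl
  have hw : ∀ (y : ℝ) (z : HaarIdx' N → ℝ), wMapY N y z = y • a₀ + L z := by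
    intro y z
    funext ℓ
    show y * _ + _ = y * a₀ ℓ + L z ℓ
    rw [hLz]
  have hfun : (fun z : HaarIdx' N → ℝ => ∫ y : ℝ, g (F (wMapY N y z)) * stdGaussPDF y)
      = fun z => ∫ y : ℝ, stdGaussPDF y • (g ∘ F) (y • a₀ + L z) := by
    funext z
    congr 1
    funext y
    rw [hw, smul_eq_mul, mul_comm]
    rfl
  have hu : ContDiff ℝ p (g ∘ F) := hg.comp hF
  have hgop : ∀ j, j ≤ p → ∀ t : ℝ, ‖iteratedFDeriv ℝ j g t‖ ≤ Cg := by
    intro j hj t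
    rw [norm_iteratedFDeriv_eq_norm_iteratedDeriv, Real.norm_eq_abs]
    exact hgb j hj t
  have hFop : ∀ j, 1 ≤ j → j ≤ p → ∀ x,
      ‖iteratedFDeriv ℝ j F x‖ ≤ ((2^(N+1) : ℕ) : ℝ)^j * max 1 c := by
    intro j h1 h2 x
    have := opnorm_of_basis_bound (iteratedFDeriv ℝ j F x)
      (c := max 1 c) (fun r => le_trans (hFb j h1 h2 x r) (le_max_right 1 c))
    simpa [Fintype.card_fin] using this
  have hub : ∀ j, j ≤ p → ∃ B, ∀ x, ‖iteratedFDeriv ℝ j (g ∘ F) x‖ ≤ B := by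
    intro j hj
    refine ⟨(j.factorial : ℝ) * Cg * (((2^(N+1):ℕ):ℝ) * max 1 c)^j, fun x => ?_⟩
    refine norm_iteratedFDeriv_comp_le hg hF (by exact_mod_cast hj) x
      (fun i hi => hgop i (le_trans hi hj) _) ?_
    intro i h1 h2
    calc ‖iteratedFDeriv ℝ i F x‖ ≤ ((2^(N+1):ℕ):ℝ)^i * max 1 c :=
          hFop i h1 (le_trans h2 hj) x
      _ ≤ (((2^(N+1):ℕ):ℝ) * max 1 c)^i := by
          rw [mul_pow]
          refine mul_le_mul_of_nonneg_left (le_self_pow₀ (le_max_left 1 c) (by omega)) (by positivity)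
  obtain ⟨hC, hFormula⟩ := param_integral p (g ∘ F) hu hub a₀ L
  constructor
  · rw [hfun]; exact hC
  · intro idx z
    rw [hfun, hFormula z (fun i => Pi.single (idx i) 1)]
    have hLe : ∀ i₀ : HaarIdx' N, L (Pi.single i₀ 1) = d i₀ := by
      intro i₀
      funext ℓ
      rw [hLz]
      rw [Finset.sum_eq_single i₀]
      · rw [Pi.single_eq_same, one_mul]
      · intro b _ hb
        rw [Pi.single_eq_of_ne hb, zero_mul]
      · intro h
        exact absurd (Finset.mem_univ _) h
    have hCg0 : 0 ≤ Cg := le_trans (abs_nonneg _) (hgb 0 (Nat.zero_le p) 0)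
    set K : ℝ := (Fintype.card (OrderedFinpartition p) : ℝ) * (Cg * (max 1 c)^p) with hK
    have hK0 : 0 ≤ K := by positivity
    set T : ℝ := (2:ℝ)^(-(∑ j, (((idx j).1:ℕ):ℝ))/2) with hT
    have hT0 : 0 ≤ T := le_of_lt (Real.rpow_pos_of_pos two_pos _)
    have hpt : ∀ y : ℝ,
        |iteratedFDeriv ℝ p (g ∘ F) (y • a₀ + L z) (fun i => L (Pi.single (idx i) 1))|
          ≤ K * T := by
      intro y
      have hdir : (fun i => L (Pi.single (idx i) 1)) = fun i => d (idx i) :=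
        funext fun i => hLe _
      rw [hdir, cmlmap_basis_expand]
      calc |∑ r : Fin p → Fin (2^(N+1)), (∏ i, d (idx i) (r i)) •
              iteratedFDeriv ℝ p (g ∘ F) (y • a₀ + L z) (fun i => Pi.single (r i) 1)|
          ≤ ∑ r : Fin p → Fin (2^(N+1)), (∏ i, |d (idx i) (r i)|) * K := by
            refine le_trans (Finset.abs_sum_le_sum_abs _ _) (Finset.sum_le_sum fun r _ => ?_)
            rw [smul_eq_mul, abs_mul, Finset.abs_prod]
            refine mul_le_mul_of_nonneg_left ?_ (Finset.prod_nonneg fun _ _ => abs_nonneg _)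
            exact comp_directional_bound p g F hg hF hgb hFb _ r
        _ = (∏ i, ∑ ℓ, |d (idx i) ℓ|) * K := by
            rw [← Finset.sum_mul]
            congr 1
            rw [Finset.prod_univ_sum, Fintype.piFinset_univ]
        _ ≤ (∏ i, (2:ℝ)^(-(((idx i).1:ℕ):ℝ)/2)) * K := by
            refine mul_le_mul_of_nonneg_right
              (Finset.prod_le_prod (fun i _ => Finset.sum_nonneg fun ℓ _ => abs_nonneg _)
                fun i _ => haar_sum_bound N _ _) hK0
        _ = K * T := by
            rw [prod_rpow_half (fun j => ((idx j).1 : ℕ)), mul_comm]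
    calc |∫ y : ℝ, stdGaussPDF y • iteratedFDeriv ℝ p (g ∘ F) (y • a₀ + L z)
            (fun i => L (Pi.single (idx i) 1))|
        ≤ ∫ y : ℝ, stdGaussPDF y * (K * T) := by
          rw [← Real.norm_eq_abs]
          refine norm_integral_le_of_norm_le (integrable_stdGaussPDF.mul_const _)
            (Filter.Eventually.of_forall fun y => ?_)
          rw [norm_smul, Real.norm_eq_abs, Real.norm_eq_abs,
            abs_of_nonneg (stdGaussPDF_nonneg y)]
          exact mul_le_mul_of_nonneg_left (hpt y) (stdGaussPDF_nonneg y)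
      _ = K * T := by rw [integral_mul_const, integral_stdGaussPDF, one_mul]
      _ ≤ (Fintype.card (OrderedFinpartition p) : ℝ) * (max 0 Cg * (max 1 c)^p) * T := by
          refine mul_le_mul_of_nonneg_right ?_ hT0
          rw [hK]
          refine mul_le_mul_of_nonneg_left ?_ (Nat.cast_nonneg _)
          exact mul_le_mul_of_nonneg_right (le_max_right 0 Cg) (by positivity)
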